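/- Let G be a graph on n vertices and v a vertex of G with deg(v) ≥ 1. Then λ(G)^2 ≤ λ(G − v)^2 + 2·deg(v) − 1, where λ denotes the adjacency spectral radius and G − v is the graph obtained by deleting v. -/

import Mathlib

open Matrix

noncomputable section

namespace SunDasAux

variable {n : Type*} [Fintype n] [DecidableEq n]

lemma inner_eq_dot (w z : EuclideanSpace ℝ n) :
    (inner ℝ w z : ℝ) = ⇑w ⬝ᵥ ⇑z := by
  simp [PiLp.inner_apply, RCLike.inner_apply, dotProduct, mul_comm]

/-- Expansion of a quadratic form in the eigenbasis of a hermitian real matrix. -/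
lemma dot_expand {A : Matrix n n ℝ} (hA : A.IsHermitian) (B : Matrix n n ℝ) (g : n → ℝ)
    (hB : ∀ i, B *ᵥ ⇑(hA.eigenvectorBasis i) = g i • ⇑(hA.eigenvectorBasis i)) (x : n → ℝ) :
    x ⬝ᵥ (B *ᵥ x) = ∑ i, g i * (⇑(hA.eigenvectorBasis i) ⬝ᵥ x) ^ 2 := by
  classical
  set u := hA.eigenvectorBasis with hu
  set T := Matrix.toEuclideanLin B with hT
  set xE : EuclideanSpace ℝ n := (WithLp.equiv 2 (n → ℝ)).symm x with hx
  have hcoe : ⇑xE = x := rfl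
  have hTapp : ∀ z : EuclideanSpace ℝ n, T z = (WithLp.equiv 2 (n → ℝ)).symm (B *ᵥ ⇑z) :=
    fun z => Matrix.toEuclideanLin_apply B z
  have hTu : ∀ i, T (u i) = g i • u i := by
    intro i
    rw [hTapp, hB i]
    apply (WithLp.equiv 2 (n → ℝ)).injective
    simp
  have key : (inner ℝ xE (T xE) : ℝ) = ∑ i, g i * (inner ℝ (u i) xE : ℝ) ^ 2 := by
    conv_lhs => rw [← u.sum_repr' xE]
    rw [map_sum]
    simp only [_root_.map_smul, hTu, smul_smul]
    simp only [inner_sum, sum_inner, real_inner_smul_right, real_inner_smul_left]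
    have horth := u.orthonormal
    rw [orthonormal_iff_ite] at horth
    have : ∀ i, (∑ j, (inner ℝ (u i) xE : ℝ) * g i * ((inner ℝ (u j) xE : ℝ) * (inner ℝ (u j) (u i) : ℝ)))
        = g i * (inner ℝ (u i) xE : ℝ) ^ 2 := by
      intro i
      rw [Finset.sum_eq_single i]
      · have h1 : (inner ℝ (u i) (u i) : ℝ) = 1 := by simpa using horth i i
        rw [h1]; ring
      · intro j _ hj
        have h0 : (inner ℝ (u j) (u i) : ℝ) = 0 := by simpa [hj] using horth j i
        rw [h0]; ring
      · intro h; simp at h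
    exact Finset.sum_congr rfl fun i _ => this i
  have hdot : x ⬝ᵥ (B *ᵥ x) = (inner ℝ xE (T xE) : ℝ) := by
    rw [inner_eq_dot, hcoe, hTapp]
    simp only [WithLp.equiv_symm_apply, WithLp.ofLp_toLp]
    rfl
  rw [hdot, key]
  exact Finset.sum_congr rfl fun i _ => by rw [inner_eq_dot, hcoe]

lemma dot_self_expand {A : Matrix n n ℝ} (hA : A.IsHermitian) (x : n → ℝ) :
    x ⬝ᵥ x = ∑ i, (⇑(hA.eigenvectorBasis i) ⬝ᵥ x) ^ 2 := by
  have h := dot_expand hA 1 (fun _ => 1) (fun i => by simp) x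
  simpa using h

lemma rayleigh_le {A : Matrix n n ℝ} (hA : A.IsHermitian) (l : ℝ)
    (hl : ∀ i, hA.eigenvalues i ≤ l) (x : n → ℝ) :
    x ⬝ᵥ (A *ᵥ x) ≤ l * (x ⬝ᵥ x) := by
  rw [dot_expand hA A hA.eigenvalues hA.mulVec_eigenvectorBasis x, dot_self_expand hA x,
    Finset.mul_sum]
  exact Finset.sum_le_sum fun i _ => by
    have := sq_nonneg (⇑(hA.eigenvectorBasis i) ⬝ᵥ x)
    nlinarith [hl i]

lemma eig_le_sSup {A : Matrix n n ℝ} (hA : A.IsHermitian) (i : n) :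
    hA.eigenvalues i ≤ sSup (spectrum ℝ A) :=
  le_csSup (Matrix.finite_real_spectrum.bddAbove) (hA.eigenvalues_mem_spectrum_real i)

lemma exists_eig_sSup [Nonempty n] {A : Matrix n n ℝ} (hA : A.IsHermitian) :
    ∃ i, hA.eigenvalues i = sSup (spectrum ℝ A) := by
  have hfin : (spectrum ℝ A).Finite := Matrix.finite_real_spectrum
  have hne : (spectrum ℝ A).Nonempty := by
    rw [hA.spectrum_real_eq_range_eigenvalues]
    exact Set.range_nonempty _
  have h := hne.csSup_mem hfin
  rw [hA.spectrum_real_eq_range_eigenvalues] at h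
  obtain ⟨i, hi⟩ := h
  exact ⟨i, by rw [hi, hA.spectrum_real_eq_range_eigenvalues]⟩

lemma basis_dot_self {A : Matrix n n ℝ} (hA : A.IsHermitian) (i : n) :
    ⇑(hA.eigenvectorBasis i) ⬝ᵥ ⇑(hA.eigenvectorBasis i) = 1 := by
  rw [← inner_eq_dot]
  have horth := hA.eigenvectorBasis.orthonormal
  rw [orthonormal_iff_ite] at horth
  simpa using horth i i

lemma perron {A : Matrix n n ℝ} (hA : A.IsHermitian) (hpos : ∀ i j, 0 ≤ A i j) (i : n) :
    -(sSup (spectrum ℝ A)) ≤ hA.eigenvalues i := by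
  set z : n → ℝ := ⇑(hA.eigenvectorBasis i) with hz
  have hzz : z ⬝ᵥ z = 1 := basis_dot_self hA i
  have heig : A *ᵥ z = hA.eigenvalues i • z := hA.mulVec_eigenvectorBasis i
  have hzAz : z ⬝ᵥ (A *ᵥ z) = hA.eigenvalues i := by
    rw [heig, dotProduct_smul, smul_eq_mul, hzz, mul_one]
  set w : n → ℝ := fun k => |z k| with hw
  have hww : w ⬝ᵥ w = 1 := by
    rw [← hzz]
    exact Finset.sum_congr rfl fun k _ => by simp [hw, abs_mul_abs_self]
  have h1 : -(z ⬝ᵥ (A *ᵥ z)) ≤ w ⬝ᵥ (A *ᵥ w) := by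
    rw [dotProduct, dotProduct]
    rw [← Finset.sum_neg_distrib]
    refine Finset.sum_le_sum fun k _ => ?_
    rw [Matrix.mulVec, dotProduct, Matrix.mulVec, dotProduct, Finset.mul_sum, Finset.mul_sum,
      ← Finset.sum_neg_distrib]
    refine Finset.sum_le_sum fun j _ => ?_
    have : -(z k * (A k j * z j)) ≤ |z k| * (A k j * |z j|) := by
      have habs : |z k * (A k j * z j)| = |z k| * (A k j * |z j|) := by
        rw [abs_mul, abs_mul, abs_of_nonneg (hpos k j)]
      rw [← habs]
      exact neg_le_abs _
    simpa [hw] using this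
  have h2 : w ⬝ᵥ (A *ᵥ w) ≤ sSup (spectrum ℝ A) * (w ⬝ᵥ w) :=
    rayleigh_le hA _ (eig_le_sSup hA) w
  rw [hww, mul_one] at h2
  rw [hzAz] at h1
  linarith

lemma sSup_nonneg_of_perron [Nonempty n] {A : Matrix n n ℝ} (hA : A.IsHermitian)
    (hpos : ∀ i j, 0 ≤ A i j) : 0 ≤ sSup (spectrum ℝ A) := by
  obtain ⟨i⟩ := ‹Nonempty n›
  have h1 := perron hA hpos i
  have h2 := eig_le_sSup hA i
  linarith

lemma symmdot {P : Matrix n n ℝ} (hP : Pᵀ = P) (y w : n → ℝ) :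
    (P *ᵥ y) ⬝ᵥ w = y ⬝ᵥ (P *ᵥ w) := by
  rw [Matrix.dotProduct_mulVec, ← Matrix.mulVec_transpose, hP]

end SunDasAux

end
lemma SunDasAux.final_algebra {lam a dR S1 : ℝ} (hdR1 : 1 ≤ dR) (ha0 : 0 ≤ a) (hgt : a < lam)
    (hS1a : S1 ≤ a * dR) (hS1d : S1 ≤ dR * (dR - 1))
    (resolv : lam * (lam ^ 2 - a ^ 2) ≤ lam * dR + S1) :
    lam ^ 2 ≤ a ^ 2 + 2 * dR - 1 := by
  have hlam0 : 0 ≤ lam := le_trans ha0 (le_of_lt hgt)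
  have hlampos : 0 < lam := lt_of_le_of_lt ha0 hgt
  rcases le_or_gt dR lam with hcase | hcase
  · have hprod : 0 ≤ (lam - dR) * (dR - 1) := mul_nonneg (by linarith) (by linarith)
    nlinarith [resolv, hS1d, hprod, hlampos]
  · rcases le_or_gt (a * dR) (lam * (dR - 1)) with hsub | hsub
    · nlinarith [resolv, hS1a, hlampos, hdR1]
    · have h2 : 0 ≤ lam * (dR - 1) := mul_nonneg hlam0 (by linarith)
      have hsq : (lam * (dR - 1)) * (lam * (dR - 1)) < (a * dR) * (a * dR) :=
        mul_self_lt_mul_self h2 hsub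
      have hdRpos : 0 < dR := by linarith
      nlinarith [hsq, hdR1, hlam0, hcase, mul_pos hdRpos hdRpos, hgt, ha0]

/-- The adjacency spectral radius of a finite simple graph: the supremum of the
(real) spectrum of its adjacency matrix, i.e. its largest eigenvalue. -/
noncomputable def specRad {V : Type*} [Fintype V] [DecidableEq V] (G : SimpleGraph V) : ℝ := by
  classical exact sSup (spectrum ℝ (G.adjMatrix ℝ))

lemma specRad_eq {V : Type*} [Fintype V] [DecidableEq V] (G : SimpleGraph V)
    [DecidableRel G.Adj] : specRad G = sSup (spectrum ℝ (G.adjMatrix ℝ)) := by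
  unfold specRad
  congr!

/-- Sun–Das inequality: deleting a vertex `v` of degree `≥ 1` satisfies
`λ(G)² ≤ λ(G − v)² + 2·deg(v) − 1`. -/
theorem stmt_18 {V : Type*} [Fintype V] [DecidableEq V] (G : SimpleGraph V) (v : V)
    (hd : 1 ≤ (G.neighborSet v).ncard) :
    (specRad G) ^ 2 ≤
      (specRad (G.comap (Subtype.val : {w : V // w ≠ v} → V))) ^ 2 +
        2 * ((G.neighborSet v).ncard : ℝ) - 1 := by
  classical
  obtain ⟨u0, hu0⟩ : (G.neighborSet v).Nonempty := by
    apply Set.nonempty_of_ncard_ne_zero; omega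
  have hu0v : u0 ≠ v := fun h => G.irrefl (h ▸ hu0)
  haveI : Nonempty {w : V // w ≠ v} := ⟨⟨u0, hu0v⟩⟩
  haveI : Nonempty V := ⟨v⟩
  set G' := G.comap (Subtype.val : {w : V // w ≠ v} → V) with hG'
  set A : Matrix V V ℝ := G.adjMatrix ℝ with hAdef
  set A' : Matrix {w : V // w ≠ v} {w : V // w ≠ v} ℝ := G'.adjMatrix ℝ with hA'def
  have hA : A.IsHermitian := by
    rw [Matrix.IsHermitian, Matrix.conjTranspose_eq_transpose_of_trivial]
    exact G.isSymm_adjMatrix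
  have hA' : A'.IsHermitian := by
    rw [Matrix.IsHermitian, Matrix.conjTranspose_eq_transpose_of_trivial]
    exact G'.isSymm_adjMatrix
  set lam : ℝ := sSup (spectrum ℝ A) with hlam
  set a : ℝ := sSup (spectrum ℝ A') with ha
  have hlamG : specRad G = lam := specRad_eq G
  have haG' : specRad G' = a := specRad_eq G'
  rw [hlamG, haG']
  set dR : ℝ := ((G.neighborSet v).ncard : ℝ) with hdR
  have hdR1 : 1 ≤ dR := by
    rw [hdR]; exact_mod_cast hd
  -- nonnegativity of entries
  have hposA : ∀ i j, 0 ≤ A i j := fun i j => by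
    rw [hAdef]; simp [SimpleGraph.adjMatrix_apply]; positivity
  have hposA' : ∀ i j, 0 ≤ A' i j := fun i j => by
    rw [hA'def]; simp [SimpleGraph.adjMatrix_apply]; positivity
  have hA'1 : ∀ i j, A' i j ≤ 1 := fun i j => by
    rw [hA'def]; simp only [SimpleGraph.adjMatrix_apply]; split <;> norm_num
  have hlam0 : 0 ≤ lam := SunDasAux.sSup_nonneg_of_perron hA hposA
  have ha0 : 0 ≤ a := SunDasAux.sSup_nonneg_of_perron hA' hposA'
  -- close the easy case
  rcases le_or_gt lam a with hle | hgt
  · nlinarith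
  -- top eigenvector of A
  obtain ⟨i0, hi0⟩ := SunDasAux.exists_eig_sSup hA
  set x : V → ℝ := ⇑(hA.eigenvectorBasis i0) with hx
  have hxx : x ⬝ᵥ x = 1 := SunDasAux.basis_dot_self hA i0
  have hAx : A *ᵥ x = lam • x := by
    rw [hlam, ← hi0]; exact hA.mulVec_eigenvectorBasis i0
  -- restriction and border vector
  set y : {w : V // w ≠ v} → ℝ := fun w => x w.1 with hy
  set b : {w : V // w ≠ v} → ℝ := fun w => if G.Adj v w.1 then 1 else 0 with hb
  -- splitting sums
  have hsplit : ∀ f : V → ℝ, ∑ w, f w = f v + ∑ w : {w : V // w ≠ v}, f w.1 := by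
    intro f
    rw [← Finset.add_sum_erase _ f (Finset.mem_univ v)]
    congr 1
    exact Finset.sum_subtype _ (fun w => by simp [Finset.mem_erase]) _
  -- entries of A'
  have hA'entry : ∀ w u : {w : V // w ≠ v}, A' w u = A w.1 u.1 := by
    intro w u
    rw [hA'def, hAdef]
    simp only [SimpleGraph.adjMatrix_apply]
    exact if_congr (by rw [hG']; rfl) rfl rfl
  have hAbord : ∀ w : {w : V // w ≠ v}, A w.1 v = b w := by
    intro w
    rw [hAdef, hb]
    simp only [SimpleGraph.adjMatrix_apply]
    exact if_congr (SimpleGraph.adj_comm G w.1 v) rfl rfl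
  -- the two eigen-equations
  have key2 : lam * x v = b ⬝ᵥ y := by
    have h := congrFun hAx v
    simp only [Pi.smul_apply, smul_eq_mul] at h
    rw [← h]
    show (∑ u, A v u * x u) = _
    rw [hsplit (fun u => A v u * x u)]
    have hvv : A v v * x v = 0 := by
      rw [hAdef]; simp [SimpleGraph.adjMatrix_apply]
    rw [hvv, zero_add]
    refine Finset.sum_congr rfl fun w _ => ?_
    show A v ↑w * x ↑w = b w * y w
    rw [hAdef, hb]
    simp [SimpleGraph.adjMatrix_apply, ite_mul, hy]
  have key1 : ∀ w : {w : V // w ≠ v}, lam * y w = (A' *ᵥ y) w + b w * x v := by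
    intro w
    have h := congrFun hAx w.1
    simp only [Pi.smul_apply, smul_eq_mul] at h
    have hexp : (A *ᵥ x) w.1 = (A' *ᵥ y) w + b w * x v := by
      show (∑ u, A w.1 u * x u) = _
      rw [hsplit (fun u => A w.1 u * x u)]
      rw [hAbord w]
      have hsum : (A' *ᵥ y) w = ∑ u : {w : V // w ≠ v}, A ↑w ↑u * x ↑u := by
        show (∑ u, A' w u * y u) = _
        exact Finset.sum_congr rfl fun u _ => by rw [hA'entry w u]
      rw [hsum]
      exact add_comm _ _
    rw [← hexp, h, hy]
  -- facts about b
  have hb0 : ∀ w, 0 ≤ b w := by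
    intro w; rw [hb]; dsimp only; split <;> norm_num
  have hb1 : ∀ w, b w ≤ 1 := by
    intro w; rw [hb]; dsimp only; split <;> norm_num
  have hbb : ∀ w, b w * b w = b w := by
    intro w; rw [hb]; dsimp only; split <;> norm_num
  have hbsum : ∑ w : {w : V // w ≠ v}, b w = dR := by
    have h1 : ∑ w : V, (if G.Adj v w then (1:ℝ) else 0) = dR := by
      rw [Finset.sum_boole, hdR]
      congr 1
      rw [Set.ncard_eq_toFinset_card']
      congr 1
      ext u
      simp [SimpleGraph.neighborSet]
      exact Set.mem_toFinset.symm
    calc ∑ w : {w : V // w ≠ v}, b w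
        = ∑ w : V, (if G.Adj v w then (1:ℝ) else 0) := by
          rw [hsplit (fun w => if G.Adj v w then (1:ℝ) else 0), if_neg (G.irrefl), zero_add]
      _ = dR := h1
  have hb2 : b ⬝ᵥ b = dR := by
    calc b ⬝ᵥ b = ∑ w, b w * b w := rfl
      _ = ∑ w, b w := Finset.sum_congr rfl fun w _ => hbb w
      _ = dR := hbsum
  -- the quantity S1
  set S1 : ℝ := b ⬝ᵥ (A' *ᵥ b) with hS1def
  have hS1a : S1 ≤ a * dR := by
    have h := SunDasAux.rayleigh_le hA' a (fun i => SunDasAux.eig_le_sSup hA' i) b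
    rw [hb2] at h
    exact h
  have hS1d : S1 ≤ dR * (dR - 1) := by
    have hAb : ∀ w, (A' *ᵥ b) w ≤ dR - b w := by
      intro w
      have hterm : ∀ u, A' w u * b u ≤ b u - (if u = w then b u else 0) := by
        intro u
        by_cases h : u = w
        · subst h
          have h0 : A' u u = 0 := by rw [hA'def]; simp
          simp [h0]
        · rw [if_neg h, sub_zero]
          nlinarith [hposA' w u, hb0 u, hb1 u, hA'1 w u]
      calc (A' *ᵥ b) w = ∑ u, A' w u * b u := rfl
        _ ≤ ∑ u, (b u - (if u = w then b u else 0)) := Finset.sum_le_sum fun u _ => hterm u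
        _ = (∑ u, b u) - (∑ u, (if u = w then b u else 0)) := Finset.sum_sub_distrib _ _
        _ = dR - b w := by rw [hbsum, Finset.sum_ite_eq' Finset.univ w b, if_pos (Finset.mem_univ w)]
    calc S1 = ∑ w, b w * (A' *ᵥ b) w := rfl
      _ ≤ ∑ w, b w * (dR - b w) :=
          Finset.sum_le_sum fun w _ => mul_le_mul_of_nonneg_left (hAb w) (hb0 w)
      _ = dR * (∑ w, b w) - ∑ w, b w * b w := by
          rw [Finset.mul_sum, ← Finset.sum_sub_distrib]
          exact Finset.sum_congr rfl fun w _ => by ring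
      _ = dR * dR - dR := by
          rw [show (∑ w, b w * b w) = dR from
            (Finset.sum_congr rfl fun w _ => hbb w).trans hbsum, hbsum]
      _ = dR * (dR - 1) := by ring
  -- matrices P, R, W
  set P : Matrix {w : V // w ≠ v} {w : V // w ≠ v} ℝ := lam • (1 : Matrix _ _ ℝ) - A' with hP
  set R : Matrix {w : V // w ≠ v} {w : V // w ≠ v} ℝ := lam • (1 : Matrix _ _ ℝ) + A' with hR
  have hA's : A'ᵀ = A' := G'.isSymm_adjMatrix
  have hPt : Pᵀ = P := by
    rw [hP, Matrix.transpose_sub, Matrix.transpose_smul, Matrix.transpose_one, hA's]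
  set z : {w : V // w ≠ v} → ℝ := (x v) • b with hz
  have hPy : P *ᵥ y = z := by
    funext w
    have hcomp : (P *ᵥ y) w = lam * y w - (A' *ᵥ y) w := by
      rw [hP, Matrix.sub_mulVec, Matrix.smul_mulVec, Matrix.one_mulVec]
      simp
    rw [hcomp]
    have hzw : z w = x v * b w := by rw [hz]; simp
    rw [hzw]
    have h := key1 w
    linarith
  have e1 : y ⬝ᵥ (P *ᵥ y) = lam * (x v)^2 := by
    rw [hPy]
    have h1 : y ⬝ᵥ z = x v * (b ⬝ᵥ y) := by
      rw [hz, dotProduct_smul, smul_eq_mul, dotProduct_comm]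
    rw [h1, ← key2]
    ring
  have e2 : z ⬝ᵥ (R *ᵥ z) = (x v)^2 * (lam * dR + S1) := by
    have hbRb : b ⬝ᵥ (R *ᵥ b) = lam * dR + S1 := by
      rw [hR, Matrix.add_mulVec, Matrix.smul_mulVec, Matrix.one_mulVec, dotProduct_add,
        dotProduct_smul, smul_eq_mul, hb2, hS1def]
    rw [hz, Matrix.mulVec_smul, smul_dotProduct, dotProduct_smul, hbRb]
    simp only [smul_eq_mul]
    ring
  have e3 : z ⬝ᵥ (R *ᵥ z) = y ⬝ᵥ ((P * (R * P)) *ᵥ y) := by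
    rw [← hPy, SunDasAux.symmdot hPt]
    rw [Matrix.mulVec_mulVec, Matrix.mulVec_mulVec, Matrix.mul_assoc]
  set W : Matrix {w : V // w ≠ v} {w : V // w ≠ v} ℝ := P * (R * P) - (lam^2 - a^2) • P with hW
  have e4 : y ⬝ᵥ (W *ᵥ y) = y ⬝ᵥ ((P * (R * P)) *ᵥ y) - (lam^2 - a^2) * (y ⬝ᵥ (P *ᵥ y)) := by
    rw [hW, Matrix.sub_mulVec, dotProduct_sub, Matrix.smul_mulVec, dotProduct_smul,
      smul_eq_mul]
  -- spectral positivity of W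
  have hbasisact : ∀ i, W *ᵥ ⇑(hA'.eigenvectorBasis i)
      = ((lam - hA'.eigenvalues i) * ((lam + hA'.eigenvalues i) * (lam - hA'.eigenvalues i))
         - (lam^2 - a^2) * (lam - hA'.eigenvalues i)) • ⇑(hA'.eigenvectorBasis i) := by
    intro i
    have hAu : A' *ᵥ ⇑(hA'.eigenvectorBasis i) = hA'.eigenvalues i • ⇑(hA'.eigenvectorBasis i) :=
      hA'.mulVec_eigenvectorBasis i
    have hPu : P *ᵥ ⇑(hA'.eigenvectorBasis i)
        = (lam - hA'.eigenvalues i) • ⇑(hA'.eigenvectorBasis i) := by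
      rw [hP, Matrix.sub_mulVec, Matrix.smul_mulVec, Matrix.one_mulVec, hAu, sub_smul]
    have hRu : R *ᵥ ⇑(hA'.eigenvectorBasis i)
        = (lam + hA'.eigenvalues i) • ⇑(hA'.eigenvectorBasis i) := by
      rw [hR, Matrix.add_mulVec, Matrix.smul_mulVec, Matrix.one_mulVec, hAu, add_smul]
    rw [hW, Matrix.sub_mulVec, Matrix.smul_mulVec]
    rw [← Matrix.mulVec_mulVec, ← Matrix.mulVec_mulVec, hPu, Matrix.mulVec_smul, hRu,
      smul_smul, Matrix.mulVec_smul, hPu, smul_smul, sub_smul, smul_smul]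
    module
  have hWpos : 0 ≤ y ⬝ᵥ (W *ᵥ y) := by
    rw [SunDasAux.dot_expand hA' W _ hbasisact y]
    apply Finset.sum_nonneg
    intro i _
    have h1 : hA'.eigenvalues i ≤ a := SunDasAux.eig_le_sSup hA' i
    have h2 : -a ≤ hA'.eigenvalues i := SunDasAux.perron hA' hposA' i
    have heq : (lam - hA'.eigenvalues i) * ((lam + hA'.eigenvalues i) * (lam - hA'.eigenvalues i))
         - (lam^2 - a^2) * (lam - hA'.eigenvalues i)
        = (lam - hA'.eigenvalues i) * ((a - hA'.eigenvalues i) * (a + hA'.eigenvalues i)) := by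
      ring
    rw [heq]
    apply mul_nonneg
    apply mul_nonneg (by linarith) (mul_nonneg (by linarith) (by linarith))
    exact sq_nonneg _
  have hlampos : 0 < lam := lt_of_le_of_lt ha0 hgt
  by_cases hxv : x v = 0
  · -- the top eigenvector lives on G - v, contradiction with lam > a
    exfalso
    have hyy : y ⬝ᵥ y = 1 := by
      have h := hsplit (fun w => x w * x w)
      rw [hxv, mul_zero, zero_add] at h
      calc y ⬝ᵥ y = ∑ w : {w : V // w ≠ v}, x w.1 * x w.1 := rfl
        _ = ∑ w, x w * x w := h.symm
        _ = 1 := hxx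
    have hyAy : y ⬝ᵥ (A' *ᵥ y) = lam := by
      calc y ⬝ᵥ (A' *ᵥ y) = ∑ w, y w * (A' *ᵥ y) w := rfl
        _ = ∑ w, lam * (y w * y w) := Finset.sum_congr rfl fun w _ => by
              have h := key1 w
              rw [hxv, mul_zero, add_zero] at h
              rw [← h]; ring
        _ = lam * (y ⬝ᵥ y) := by rw [← Finset.mul_sum]; rfl
        _ = lam := by rw [hyy, mul_one]
    have hray := SunDasAux.rayleigh_le hA' a (fun i => SunDasAux.eig_le_sSup hA' i) y
    rw [hyy, mul_one, hyAy] at hray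
    linarith
  · have hxv2 : 0 < (x v)^2 := by positivity
    have resolv : lam * (lam^2 - a^2) ≤ lam * dR + S1 := by
      have h := hWpos
      rw [e4, ← e3, e2, e1] at h
      by_contra hcon
      push_neg at hcon
      have h2 : (x v)^2 * (lam * dR + S1) < (x v)^2 * (lam * (lam^2 - a^2)) :=
        mul_lt_mul_of_pos_left hcon hxv2
      have h3 : (x v)^2 * (lam * (lam^2 - a^2)) = (lam^2 - a^2) * (lam * (x v)^2) := by ring
      linarith
    exact SunDasAux.final_algebra hdR1 ha0 hgt hS1a hS1d resolv
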